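/- arXiv:2509.00606 — 7 statements merged into one kernel-verified Lean document; each statement's English description precedes it below -/
import Mathlib

section
/- Let H : ℝ → ℝ be infinitely differentiable with H(t) = 0 for all t ≤ 0. Then the function ℝ² → ℝ defined by (x,y) ↦ H(√(x²+y²))/(x²+y²) for (x,y) ≠ (0,0) and by 0 at the origin, is infinitely differentiable on all of ℝ². -/
open Real Filter Set intervalIntegral

/-- The derivative of a smooth function vanishing on `(-∞,0]` also vanishes there. -/
lemma derivVanish (H : ℝ → ℝ) (hH : ContDiff ℝ (⊤ : ℕ∞) H) (h0 : ∀ t ≤ (0:ℝ), H t = 0) :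
    ∀ t ≤ (0:ℝ), deriv H t = 0 := by
  have hneg : ∀ t < (0:ℝ), deriv H t = 0 := by
    intro t ht
    have : H =ᶠ[nhds t] (fun _ => 0) := by
      filter_upwards [Iio_mem_nhds ht] with x hx using h0 x (le_of_lt hx)
    rw [this.deriv_eq]; simp
  intro t ht
  rcases lt_or_eq_of_le ht with h | h
  · exact hneg t h
  · subst h
    have hc : Continuous (deriv H) := (contDiff_infty_iff_deriv.mp hH).2.continuous
    have h1 : Tendsto (deriv H) (nhdsWithin 0 (Iio 0)) (nhds (deriv H 0)) :=
      (hc.continuousAt).tendsto.mono_left nhdsWithin_le_nhds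
    have h2 : Tendsto (deriv H) (nhdsWithin 0 (Iio 0)) (nhds 0) := by
      have : deriv H =ᶠ[nhdsWithin (0:ℝ) (Iio 0)] (fun _ => 0) := by
        filter_upwards [self_mem_nhdsWithin] with x hx using hneg x hx
      rw [tendsto_congr' this]; exact tendsto_const_nhds
    exact tendsto_nhds_unique h1 h2

/-- Smoothness of deriv. -/
lemma derivSmooth (H : ℝ → ℝ) (hH : ContDiff ℝ (⊤ : ℕ∞) H) : ContDiff ℝ (⊤ : ℕ∞) (deriv H) :=
  (contDiff_infty_iff_deriv.mp hH).2

/-- Polynomial bound near 0 for smooth functions vanishing on `(-∞,0]`. -/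
lemma boundLemma : ∀ (n : ℕ) (H : ℝ → ℝ), ContDiff ℝ (⊤ : ℕ∞) H → (∀ t ≤ (0:ℝ), H t = 0) →
    ∃ C : ℝ, 0 ≤ C ∧ ∀ t : ℝ, 0 ≤ t → t ≤ 1 → |H t| ≤ C * t ^ n := by
  intro n
  induction n with
  | zero =>
    intro H hH h0
    obtain ⟨C, hC⟩ := (isCompact_Icc (a := (0:ℝ)) (b := 1)).exists_bound_of_continuousOn
      hH.continuous.continuousOn
    refine ⟨max C 0, le_max_right _ _, fun t h1 h2 => ?_⟩
    rw [pow_zero, mul_one]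
    calc |H t| = ‖H t‖ := (Real.norm_eq_abs _).symm
      _ ≤ C := hC t ⟨h1, h2⟩
      _ ≤ max C 0 := le_max_left _ _
  | succ n ih =>
    intro H hH h0
    obtain ⟨C, hC0, hC⟩ := ih (deriv H) (derivSmooth H hH) (derivVanish H hH h0)
    refine ⟨C, hC0, fun t ht0 ht1 => ?_⟩
    have hdc : Continuous (deriv H) := (derivSmooth H hH).continuous
    have hI : IntervalIntegrable (deriv H) MeasureTheory.volume 0 t :=
      hdc.intervalIntegrable _ _
    have key : H t = ∫ u in (0:ℝ)..t, deriv H u := by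
      rw [intervalIntegral.integral_deriv_eq_sub
        (fun x _ => (hH.differentiable (by simp)) x) hI, h0 0 le_rfl, sub_zero]
    rw [key]
    have step1 : |∫ u in (0:ℝ)..t, deriv H u| ≤ ∫ u in (0:ℝ)..t, |deriv H u| :=
      intervalIntegral.abs_integral_le_integral_abs ht0
    have step2 : (∫ u in (0:ℝ)..t, |deriv H u|) ≤ ∫ u in (0:ℝ)..t, C * u ^ n := by
      apply intervalIntegral.integral_mono_on ht0 (hdc.abs.intervalIntegrable _ _)
        ((continuous_const.mul (continuous_pow n)).intervalIntegrable _ _)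
      intro x hx
      exact hC x hx.1 (hx.2.trans ht1)
    have step3 : (∫ u in (0:ℝ)..t, C * u ^ n) = C * (t ^ (n+1) / (n+1)) := by
      rw [intervalIntegral.integral_const_mul, integral_pow]
      norm_num
    have step4 : C * (t ^ (n+1) / (n+1)) ≤ C * t ^ (n+1) := by
      apply mul_le_mul_of_nonneg_left _ hC0
      have hpow : (0:ℝ) ≤ t ^ (n+1) := pow_nonneg ht0 _
      have hn1 : (1:ℝ) ≤ (n:ℝ) + 1 := by
        have : (0:ℝ) ≤ (n:ℝ) := Nat.cast_nonneg n
        linarith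
      calc t ^ (n+1) / ((n:ℝ)+1) ≤ t ^ (n+1) / 1 :=
            div_le_div_of_nonneg_left hpow one_pos hn1
        _ = t ^ (n+1) := div_one _
    calc |∫ u in (0:ℝ)..t, deriv H u| ≤ ∫ u in (0:ℝ)..t, C * u ^ n := step1.trans step2
      _ = C * (t ^ (n+1) / (n+1)) := step3
      _ ≤ C * t ^ (n+1) := step4

/-- Key limit: `H(√s) * s^(-a) → 0` as `s → 0⁺`. -/
lemma tendstoBase (H : ℝ → ℝ) (hH : ContDiff ℝ (⊤ : ℕ∞) H) (h0 : ∀ t ≤ (0:ℝ), H t = 0)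
    (a : ℝ) :
    Tendsto (fun s : ℝ => H (Real.sqrt s) * s ^ (-a)) (nhdsWithin 0 (Ioi 0)) (nhds 0) := by
  obtain ⟨n, hn⟩ := exists_nat_ge (2 * a + 2)
  obtain ⟨C, hC0, hC⟩ := boundLemma n H hH h0
  set b : ℝ := (n : ℝ) / 2 - a with hb_def
  have hb : 0 < b := by
    have : 2 * a + 2 ≤ (n:ℝ) := hn
    simp only [hb_def]; linarith
  apply squeeze_zero_norm' (a := fun s => C * s ^ b)
  · filter_upwards [Ioo_mem_nhdsGT_of_mem (Set.left_mem_Ico.mpr one_pos)] with s hs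
    obtain ⟨hs0, hs1⟩ := hs
    have hsq0 : (0:ℝ) ≤ Real.sqrt s := Real.sqrt_nonneg s
    have hsq1 : Real.sqrt s ≤ 1 := by
      rw [show (1:ℝ) = Real.sqrt 1 by simp]
      exact Real.sqrt_le_sqrt hs1.le
    have hb1 : |H (Real.sqrt s)| ≤ C * (Real.sqrt s) ^ n := hC _ hsq0 hsq1
    have hrpow_nonneg : (0:ℝ) ≤ s ^ (-a) := Real.rpow_nonneg hs0.le _
    have e1 : (Real.sqrt s) ^ n = s ^ ((n:ℝ)/2) := by
      rw [Real.sqrt_eq_rpow, ← Real.rpow_natCast (s ^ ((1:ℝ)/2)) n,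
        ← Real.rpow_mul hs0.le]
      ring_nf
    have e2 : s ^ ((n:ℝ)/2) * s ^ (-a) = s ^ b := by
      rw [← Real.rpow_add hs0, hb_def]; ring_nf
    calc ‖H (Real.sqrt s) * s ^ (-a)‖ = |H (Real.sqrt s)| * s ^ (-a) := by
          rw [norm_mul, Real.norm_eq_abs, Real.norm_eq_abs, abs_of_nonneg hrpow_nonneg]
      _ ≤ (C * (Real.sqrt s) ^ n) * s ^ (-a) :=
          mul_le_mul_of_nonneg_right hb1 hrpow_nonneg
      _ = C * s ^ b := by rw [e1, mul_assoc, e2]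
  · have : Tendsto (fun s : ℝ => s ^ b) (nhds 0) (nhds ((0:ℝ) ^ b)) :=
      (Real.continuousAt_rpow_const 0 b (Or.inr hb.le)).tendsto
    rw [Real.zero_rpow hb.ne'] at this
    have h2 : Tendsto (fun s : ℝ => s ^ b) (nhdsWithin 0 (Ioi 0)) (nhds 0) :=
      this.mono_left nhdsWithin_le_nhds
    simpa using h2.const_mul C

/-- The class of functions spanned by `s ↦ H(√s)·s^(-a)` (extended by 0 for `s ≤ 0`). -/
inductive Good : (ℝ → ℝ) → Prop
  | base (H : ℝ → ℝ) (hH : ContDiff ℝ (⊤ : ℕ∞) H) (h0 : ∀ t ≤ (0:ℝ), H t = 0) (a : ℝ) :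
      Good (fun s => if 0 < s then H (Real.sqrt s) * s ^ (-a) else 0)
  | add {f g : ℝ → ℝ} : Good f → Good g → Good (fun s => f s + g s)
  | smul (c : ℝ) {f : ℝ → ℝ} : Good f → Good (fun s => c * f s)

lemma Good.continuous {f : ℝ → ℝ} (hf : Good f) : Continuous f := by
  induction hf with
  | base H hH h0 a =>
    rw [continuous_iff_continuousAt]
    intro s₀
    rcases lt_trichotomy s₀ 0 with h | h | h
    · have : (fun s => if 0 < s then H (Real.sqrt s) * s ^ (-a) else 0) =ᶠ[nhds s₀]
          (fun _ => 0) := by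
        filter_upwards [Iio_mem_nhds h] with x hx
        rw [if_neg (not_lt.mpr (le_of_lt hx))]
      exact ContinuousAt.congr continuousAt_const this.symm
    · subst h
      have hval : (if 0 < (0:ℝ) then H (Real.sqrt 0) * (0:ℝ) ^ (-a) else 0) = 0 := by
        rw [if_neg (lt_irrefl 0)]
      have key : Tendsto (fun s => if 0 < s then H (Real.sqrt s) * s ^ (-a) else 0)
          (nhdsWithin (0:ℝ) (Iic 0) ⊔ nhdsWithin (0:ℝ) (Ioi 0)) (nhds 0) := by
        rw [tendsto_sup]
        constructor
        · have : (fun s => if 0 < s then H (Real.sqrt s) * s ^ (-a) else 0)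
              =ᶠ[nhdsWithin (0:ℝ) (Iic 0)] (fun _ => 0) := by
            filter_upwards [self_mem_nhdsWithin] with x hx
            have hx' : x ≤ 0 := hx
            rw [if_neg (not_lt.mpr hx')]
          rw [tendsto_congr' this]; exact tendsto_const_nhds
        · have heq : (fun s => if 0 < s then H (Real.sqrt s) * s ^ (-a) else 0)
              =ᶠ[nhdsWithin (0:ℝ) (Ioi 0)] (fun s => H (Real.sqrt s) * s ^ (-a)) := by
            filter_upwards [self_mem_nhdsWithin] with x hx
            have hx' : (0:ℝ) < x := hx
            rw [if_pos hx']
          rw [tendsto_congr' heq]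
          exact tendstoBase H hH h0 a
      rw [nhdsLE_sup_nhdsGT (0:ℝ)] at key
      simpa only [ContinuousAt, if_neg (lt_irrefl (0:ℝ))] using key
    · have heq : (fun s => if 0 < s then H (Real.sqrt s) * s ^ (-a) else 0) =ᶠ[nhds s₀]
          (fun s => H (Real.sqrt s) * s ^ (-a)) := by
        filter_upwards [Ioi_mem_nhds h] with x hx
        have hx' : (0:ℝ) < x := hx
        rw [if_pos hx']
      apply ContinuousAt.congr _ heq.symm
      exact ((hH.continuous.comp Real.continuous_sqrt).continuousAt).mul
        (Real.continuousAt_rpow_const s₀ (-a) (Or.inl h.ne'))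
  | add hf hg ihf ihg => exact ihf.add ihg
  | smul c hf ih => exact continuous_const.mul ih

lemma Good.hasDeriv {f : ℝ → ℝ} (hf : Good f) :
    ∃ g : ℝ → ℝ, Good g ∧ ∀ s, HasDerivAt f (g s) s := by
  induction hf with
  | base H hH h0 a =>
    set H' := deriv H with hH'_def
    have hH's : ContDiff ℝ (⊤ : ℕ∞) H' := derivSmooth H hH
    have hH'0 : ∀ t ≤ (0:ℝ), H' t = 0 := derivVanish H hH h0
    refine ⟨fun s => (1/2) * (if 0 < s then H' (Real.sqrt s) * s ^ (-(a + 1/2)) else 0)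
        + (-a) * (if 0 < s then H (Real.sqrt s) * s ^ (-(a + 1)) else 0), ?_, ?_⟩
    · exact Good.add (Good.smul _ (Good.base H' hH's hH'0 (a + 1/2)))
        (Good.smul _ (Good.base H hH h0 (a + 1)))
    · intro s
      beta_reduce
      rcases lt_trichotomy s 0 with h | h | h
      · -- negative point : locally zero
        have hg0 : (1/2) * (if 0 < s then H' (Real.sqrt s) * s ^ (-(a + 1/2)) else 0)
            + (-a) * (if 0 < s then H (Real.sqrt s) * s ^ (-(a + 1)) else 0) = 0 := by
          rw [if_neg (not_lt.mpr h.le), if_neg (not_lt.mpr h.le)]; ring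
        rw [hg0]
        have heq : (fun _ : ℝ => (0:ℝ)) =ᶠ[nhds s]
            (fun s => if 0 < s then H (Real.sqrt s) * s ^ (-a) else 0) := by
          filter_upwards [Iio_mem_nhds h] with x hx
          have hx' : x < 0 := hx
          rw [if_neg (not_lt.mpr (le_of_lt hx'))]
        exact (hasDerivAt_const s 0).congr_of_eventuallyEq heq.symm
      · -- at zero : slope argument
        subst h
        have hg0 : (1/2) * (if 0 < (0:ℝ) then H' (Real.sqrt 0) * (0:ℝ) ^ (-(a + 1/2)) else 0)
            + (-a) * (if 0 < (0:ℝ) then H (Real.sqrt 0) * (0:ℝ) ^ (-(a + 1)) else 0) = 0 := by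
          rw [if_neg (lt_irrefl 0), if_neg (lt_irrefl 0)]; ring
        rw [hg0, hasDerivAt_iff_tendsto_slope]
        rw [← nhdsLT_sup_nhdsGT (0:ℝ), tendsto_sup]
        constructor
        · have : slope (fun s => if 0 < s then H (Real.sqrt s) * s ^ (-a) else 0) 0
              =ᶠ[nhdsWithin (0:ℝ) (Iio 0)] (fun _ => 0) := by
            filter_upwards [self_mem_nhdsWithin] with x hx
            simp only [slope_def_field, div_eq_iff]
            rw [if_neg (not_lt.mpr hx.le), if_neg (lt_irrefl 0)]
            simp
          rw [tendsto_congr' this]; exact tendsto_const_nhds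
        · have heq : slope (fun s => if 0 < s then H (Real.sqrt s) * s ^ (-a) else 0) 0
              =ᶠ[nhdsWithin (0:ℝ) (Ioi 0)] (fun s => H (Real.sqrt s) * s ^ (-(a+1))) := by
            filter_upwards [self_mem_nhdsWithin] with x hx
            have hx0 : (0:ℝ) < x := hx
            simp only [slope_def_field]
            rw [if_neg (lt_irrefl 0), if_pos hx0]
            rw [show -(a+1) = -a + (-1) by ring, Real.rpow_add hx0, Real.rpow_neg_one]
            field_simp
            simp [hx0.ne']
          rw [tendsto_congr' heq]
          exact tendstoBase H hH h0 (a + 1)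
      · -- positive point : chain rule
        have hs0 : s ≠ 0 := h.ne'
        have hsq_pos : 0 < Real.sqrt s := Real.sqrt_pos.mpr h
        have h1 : HasDerivAt (fun x => H (Real.sqrt x))
            (H' (Real.sqrt s) * (1 / (2 * Real.sqrt s))) s :=
          ((hH.differentiable (by simp) (Real.sqrt s)).hasDerivAt).comp s
            (Real.hasDerivAt_sqrt hs0)
        have h2 : HasDerivAt (fun x : ℝ => x ^ (-a)) (-a * s ^ (-a - 1)) s :=
          Real.hasDerivAt_rpow_const (Or.inl hs0)
        have h3 : HasDerivAt (fun x => H (Real.sqrt x) * x ^ (-a))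
            (H' (Real.sqrt s) * (1 / (2 * Real.sqrt s)) * s ^ (-a)
              + H (Real.sqrt s) * (-a * s ^ (-a - 1))) s := h1.mul h2
        have heq : (fun x => H (Real.sqrt x) * x ^ (-a)) =ᶠ[nhds s]
            (fun s => if 0 < s then H (Real.sqrt s) * s ^ (-a) else 0) := by
          filter_upwards [Ioi_mem_nhds h] with x hx
          have hx' : (0:ℝ) < x := hx
          rw [if_pos hx']
        have h4 := h3.congr_of_eventuallyEq heq.symm
        refine h4.congr_deriv (Eq.symm ?_)
        rw [if_pos h, if_pos h]
        have e1 : s ^ (-(a + 1/2)) = s ^ (-a) * s ^ (-(1/2) : ℝ) := by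
          rw [← Real.rpow_add h]; ring_nf
        have e2 : s ^ (-(a + 1)) = s ^ (-a - 1) := by ring_nf
        have e3 : s ^ (-(1/2) : ℝ) = (Real.sqrt s)⁻¹ := by
          rw [Real.sqrt_eq_rpow, ← Real.rpow_neg_one (s ^ ((1:ℝ)/2)),
            ← Real.rpow_mul h.le]
          ring_nf
        rw [e1, e2, e3]
        field_simp
  | add hf hg ihf ihg =>
    obtain ⟨gf, hgf, hdf⟩ := ihf
    obtain ⟨gg, hgg, hdg⟩ := ihg
    exact ⟨fun s => gf s + gg s, Good.add hgf hgg, fun s => (hdf s).add (hdg s)⟩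
  | smul c hf ih =>
    obtain ⟨g, hg, hd⟩ := ih
    exact ⟨fun s => c * g s, Good.smul c hg, fun s => (hd s).const_mul c⟩

lemma Good.contDiff {f : ℝ → ℝ} (hf : Good f) : ContDiff ℝ (⊤ : ℕ∞) f := by
  rw [contDiff_infty]
  intro n
  induction n generalizing f with
  | zero => exact contDiff_zero.mpr hf.continuous
  | succ n ih =>
    obtain ⟨g, hg, hd⟩ := hf.hasDeriv
    have hdf : Differentiable ℝ f := fun s => (hd s).differentiableAt
    have hderiv : deriv f = g := funext fun s => (hd s).deriv
    rw [show ((n + 1 : ℕ) : WithTop ℕ∞) = (n : WithTop ℕ∞) + 1 by norm_cast]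
    rw [contDiff_succ_iff_deriv]
    refine ⟨hdf, ?_, ?_⟩
    · intro h
      exact absurd h (by simp)
    · rw [hderiv]; exact ih hg

/-- If `H : ℝ → ℝ` is infinitely differentiable and vanishes on `(-∞, 0]`, then the function
`(x, y) ↦ H(√(x² + y²))/(x² + y²)` for `(x, y) ≠ (0, 0)`, taking the value `0` at the origin,
is infinitely differentiable on all of `ℝ²`. -/
theorem stmt_4 (H : ℝ → ℝ) (hH : ContDiff ℝ (⊤ : ℕ∞) H) (hH0 : ∀ t ≤ (0 : ℝ), H t = 0)
    (G : ℝ × ℝ → ℝ)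
    (hG : ∀ p : ℝ × ℝ,
      G p = if p = (0, 0) then 0 else H (Real.sqrt (p.1 ^ 2 + p.2 ^ 2)) / (p.1 ^ 2 + p.2 ^ 2)) :
    ContDiff ℝ (⊤ : ℕ∞) G := by
  set K : ℝ → ℝ := fun s => if 0 < s then H (Real.sqrt s) * s ^ (-(1:ℝ)) else 0 with hK_def
  have hKgood : Good K := Good.base H hH hH0 1
  have hKsmooth : ContDiff ℝ (⊤ : ℕ∞) K := hKgood.contDiff
  have hq : ContDiff ℝ (⊤ : ℕ∞) (fun p : ℝ × ℝ => p.1 ^ 2 + p.2 ^ 2) :=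
    (contDiff_fst.pow 2).add (contDiff_snd.pow 2)
  have hGeq : G = K ∘ (fun p : ℝ × ℝ => p.1 ^ 2 + p.2 ^ 2) := by
    funext p
    rw [hG p]
    by_cases hp : p = (0, 0)
    · subst hp
      simp [hK_def]
    · have hq_pos : 0 < p.1 ^ 2 + p.2 ^ 2 := by
        have hor : p.1 ≠ 0 ∨ p.2 ≠ 0 := by
          by_contra hcon
          push_neg at hcon
          exact hp (Prod.ext hcon.1 hcon.2)
        rcases hor with h | h
        · have h1 : 0 < p.1 ^ 2 := by positivity
          have h2 : (0:ℝ) ≤ p.2 ^ 2 := sq_nonneg _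
          linarith
        · have h1 : 0 < p.2 ^ 2 := by positivity
          have h2 : (0:ℝ) ≤ p.1 ^ 2 := sq_nonneg _
          linarith
      simp only [Function.comp]
      rw [if_neg hp, hK_def]
      simp only
      rw [if_pos hq_pos, Real.rpow_neg_one, div_eq_mul_inv]
  rw [hGeq]
  exact hKsmooth.comp hq
end

section
/- Let γ : (0,∞) → ℝ² be the curve γ(t) = (t cos(e^{1/t}), t sin(e^{1/t})). Then (i) γ(t) → (0,0) as t → 0⁺, and (ii) the arc length of γ over the interval (0,1) is infinite: the function t ↦ ‖γ′(t)‖ is not Lebesgue integrable on (0,1), indeed ∫₀¹ ‖γ′(t)‖ dt = ∞. -/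
open MeasureTheory

/-- The spiral `γ(t) = (t cos(e^{1/t}), t sin(e^{1/t}))`. -/
noncomputable def spiral : ℝ → ℝ × ℝ :=
  fun t => (t * Real.cos (Real.exp (1 / t)), t * Real.sin (Real.exp (1 / t)))

/-- The Euclidean norm on `ℝ²`. -/
noncomputable def euclNorm (u : ℝ × ℝ) : ℝ := Real.sqrt (u.1 ^ 2 + u.2 ^ 2)

lemma spiral_hasDerivAt {t : ℝ} (ht : t ≠ 0) :
    HasDerivAt spiral
      (Real.cos (Real.exp t⁻¹) + Real.sin (Real.exp t⁻¹) * (Real.exp t⁻¹ / t),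
       Real.sin (Real.exp t⁻¹) - Real.cos (Real.exp t⁻¹) * (Real.exp t⁻¹ / t)) t := by
  have hinv := hasDerivAt_inv ht
  have hexp := hinv.exp
  have h1 : HasDerivAt (fun x : ℝ => x * Real.cos (Real.exp x⁻¹))
      (1 * Real.cos (Real.exp t⁻¹) +
        t * (-Real.sin (Real.exp t⁻¹) * (Real.exp t⁻¹ * -(t ^ 2)⁻¹))) t :=
    (hasDerivAt_id t).mul hexp.cos
  have h2 : HasDerivAt (fun x : ℝ => x * Real.sin (Real.exp x⁻¹))
      (1 * Real.sin (Real.exp t⁻¹) +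
        t * (Real.cos (Real.exp t⁻¹) * (Real.exp t⁻¹ * -(t ^ 2)⁻¹))) t :=
    (hasDerivAt_id t).mul hexp.sin
  have hs : spiral = fun x : ℝ =>
      (x * Real.cos (Real.exp x⁻¹), x * Real.sin (Real.exp x⁻¹)) := by
    funext x; simp [spiral, one_div]
  rw [hs]
  convert (h1.prodMk h2) using 2 <;> field_simp <;> ring

lemma euclNorm_deriv {t : ℝ} (ht : 0 < t) :
    euclNorm (deriv spiral t) = Real.sqrt (1 + (Real.exp t⁻¹ / t) ^ 2) := by
  rw [(spiral_hasDerivAt ht.ne').deriv]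
  unfold euclNorm
  congr 1
  have h := Real.sin_sq_add_cos_sq (Real.exp t⁻¹)
  linear_combination (1 + (Real.exp t⁻¹ / t) ^ 2) * h

lemma euclNorm_deriv_ge {t : ℝ} (ht : 0 < t) :
    t⁻¹ ≤ euclNorm (deriv spiral t) := by
  rw [euclNorm_deriv ht]
  have h1 : (1:ℝ) ≤ Real.exp t⁻¹ := Real.one_le_exp (by positivity)
  have h2 : t⁻¹ ≤ Real.exp t⁻¹ / t := by
    rw [div_eq_mul_inv]; nlinarith [inv_pos.mpr ht]
  calc t⁻¹ ≤ Real.exp t⁻¹ / t := h2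
    _ = Real.sqrt ((Real.exp t⁻¹ / t) ^ 2) := by
        rw [Real.sqrt_sq (by positivity)]
    _ ≤ _ := Real.sqrt_le_sqrt (by nlinarith)

lemma inv_lintegral_top :
    ∫⁻ t in Set.Ioo (0 : ℝ) 1, ENNReal.ofReal t⁻¹ = ⊤ := by
  by_contra h
  have hmeas : Measurable fun t : ℝ => t⁻¹ := measurable_inv
  have hint : IntegrableOn (fun t : ℝ => t⁻¹) (Set.Ioo 0 1) := by
    refine ⟨hmeas.aestronglyMeasurable, ?_⟩
    rw [hasFiniteIntegral_iff_norm]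
    have : ∫⁻ t in Set.Ioo (0:ℝ) 1, ENNReal.ofReal ‖t⁻¹‖ =
        ∫⁻ t in Set.Ioo (0:ℝ) 1, ENNReal.ofReal t⁻¹ := by
      refine setLIntegral_congr_fun measurableSet_Ioo ?_
      intro t ht
      beta_reduce
      rw [Real.norm_eq_abs, abs_of_nonneg (inv_nonneg.mpr ht.1.le)]
    rw [this]
    exact lt_top_iff_ne_top.mpr h
  have : IntegrableOn (fun t : ℝ => t ^ (-1 : ℝ)) (Set.Ioo 0 1) := by
    refine hint.congr_fun (fun t ht => ?_) measurableSet_Ioo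
    rw [Real.rpow_neg_one]
  rw [intervalIntegral.integrableOn_Ioo_rpow_iff one_pos] at this
  linarith

/-- (i) `γ(t) → (0,0)` as `t → 0⁺`, and (ii) the arc length of the spiral over `(0,1)`
is infinite: `t ↦ ‖γ'(t)‖` is not Lebesgue integrable on `(0,1)`, indeed
`∫₀¹ ‖γ'(t)‖ dt = ∞`. -/
theorem stmt_7 :
    Filter.Tendsto spiral (nhdsWithin 0 (Set.Ioi 0)) (nhds ((0 : ℝ), (0 : ℝ))) ∧
    ¬ IntegrableOn (fun t => euclNorm (deriv spiral t)) (Set.Ioo (0 : ℝ) 1) ∧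
    ∫⁻ t in Set.Ioo (0 : ℝ) 1, ENNReal.ofReal (euclNorm (deriv spiral t)) = ⊤ := by
  have habs : Filter.Tendsto (fun t : ℝ => |t|) (nhdsWithin 0 (Set.Ioi 0)) (nhds 0) := by
    have := (continuous_abs.tendsto (0:ℝ)).mono_left (nhdsWithin_le_nhds (s := Set.Ioi (0:ℝ)))
    simpa using this
  have htend : Filter.Tendsto spiral (nhdsWithin 0 (Set.Ioi 0)) (nhds ((0 : ℝ), (0 : ℝ))) := by
    rw [Prod.tendsto_iff]
    constructor
    · apply squeeze_zero_norm (a := fun t : ℝ => |t|) _ habs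
      intro t
      simp only [spiral, Real.norm_eq_abs, abs_mul]
      calc |t| * |Real.cos (Real.exp (1/t))| ≤ |t| * 1 :=
            mul_le_mul_of_nonneg_left (Real.abs_cos_le_one _) (abs_nonneg t)
        _ = |t| := mul_one _
    · apply squeeze_zero_norm (a := fun t : ℝ => |t|) _ habs
      intro t
      simp only [spiral, Real.norm_eq_abs, abs_mul]
      calc |t| * |Real.sin (Real.exp (1/t))| ≤ |t| * 1 :=
            mul_le_mul_of_nonneg_left (Real.abs_sin_le_one _) (abs_nonneg t)
        _ = |t| := mul_one _
  have hlint : ∫⁻ t in Set.Ioo (0 : ℝ) 1,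
      ENNReal.ofReal (euclNorm (deriv spiral t)) = ⊤ := by
    rw [eq_top_iff, ← inv_lintegral_top]
    refine setLIntegral_mono' measurableSet_Ioo (fun t ht => ?_)
    exact ENNReal.ofReal_le_ofReal (euclNorm_deriv_ge ht.1)
  refine ⟨htend, ?_, hlint⟩
  intro hint
  have h2 := hint.lintegral_lt_top
  rw [hlint] at h2
  exact lt_irrefl _ h2
end

section
/- Let γ : (0,∞) → ℝ² be the curve γ(t) = (t cos(e^{1/t}), t sin(e^{1/t})), and let Q(t) = cross(γ′(t), γ′′(t))/‖γ′(t)‖³, where cross(u,w) = u₁w₂ − u₂w₁. Then the function ℝ → ℝ defined by t ↦ Q(t) + 1/t for t > 0 and by 0 for t ≤ 0 is infinitely differentiable. -/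
/-- The planar cross product `cross(u, w) = u₁w₂ - u₂w₁`. -/
def planarCross (u w : ℝ × ℝ) : ℝ := u.1 * w.2 - u.2 * w.1

/-- The signed curvature density `Q(t) = cross(γ'(t), γ''(t)) / ‖γ'(t)‖³`. -/
noncomputable def spiralQ (t : ℝ) : ℝ :=
  planarCross (deriv spiral t) (deriv (deriv spiral) t) / (euclNorm (deriv spiral t)) ^ 3

/-- Explicit formula for the first derivative of the spiral. -/
noncomputable def spiralD (t : ℝ) : ℝ × ℝ :=
  (Real.cos (Real.exp (1/t)) + Real.exp (1/t) * Real.sin (Real.exp (1/t)) / t,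
   Real.sin (Real.exp (1/t)) - Real.exp (1/t) * Real.cos (Real.exp (1/t)) / t)

lemma hasDerivAt_spiral (t : ℝ) (ht : t ≠ 0) : HasDerivAt spiral (spiralD t) t := by
  have h1 : HasDerivAt (fun s : ℝ => 1 / s) (-(1 / t ^ 2)) t := by
    simpa using (hasDerivAt_inv ht)
  have h2 := h1.exp
  have hA : HasDerivAt (fun s : ℝ => s * Real.cos (Real.exp (1 / s)))
      (Real.cos (Real.exp (1/t)) + Real.exp (1/t) * Real.sin (Real.exp (1/t)) / t) t := by
    have h := (hasDerivAt_id t).mul h2.cos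
    refine h.congr_deriv ?_
    simp only [id, Pi.mul_apply]
    field_simp
  have hB : HasDerivAt (fun s : ℝ => s * Real.sin (Real.exp (1 / s)))
      (Real.sin (Real.exp (1/t)) - Real.exp (1/t) * Real.cos (Real.exp (1/t)) / t) t := by
    have h := (hasDerivAt_id t).mul h2.sin
    refine h.congr_deriv ?_
    simp only [id, Pi.mul_apply]
    field_simp; ring
  exact hA.prodMk hB

lemma deriv_spiral (t : ℝ) (ht : t ≠ 0) : deriv spiral t = spiralD t :=
  (hasDerivAt_spiral t ht).deriv

lemma hasDerivAt_spiralD (t : ℝ) (ht : t ≠ 0) :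
    HasDerivAt spiralD
      (-(Real.exp (1/t) * Real.sin (Real.exp (1/t)) + Real.exp (1/t)^2 * Real.cos (Real.exp (1/t))) / t^3,
       (Real.exp (1/t) * Real.cos (Real.exp (1/t)) - Real.exp (1/t)^2 * Real.sin (Real.exp (1/t))) / t^3) t := by
  have h1 : HasDerivAt (fun s : ℝ => 1 / s) (-(1 / t ^ 2)) t := by
    simpa using (hasDerivAt_inv ht)
  have h2 := h1.exp
  have hA : HasDerivAt (fun s : ℝ => Real.cos (Real.exp (1/s)) + Real.exp (1/s) * Real.sin (Real.exp (1/s)) / s)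
      (-(Real.exp (1/t) * Real.sin (Real.exp (1/t)) + Real.exp (1/t)^2 * Real.cos (Real.exp (1/t))) / t^3) t := by
    have h := h2.cos.add (((h2.mul h2.sin).div (hasDerivAt_id t) ht))
    refine h.congr_deriv ?_
    simp only [id, Pi.mul_apply]
    field_simp; ring
  have hB : HasDerivAt (fun s : ℝ => Real.sin (Real.exp (1/s)) - Real.exp (1/s) * Real.cos (Real.exp (1/s)) / s)
      ((Real.exp (1/t) * Real.cos (Real.exp (1/t)) - Real.exp (1/t)^2 * Real.sin (Real.exp (1/t))) / t^3) t := by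
    have h := h2.sin.sub (((h2.mul h2.cos).div (hasDerivAt_id t) ht))
    refine h.congr_deriv ?_
    simp only [id, Pi.mul_apply]
    field_simp; ring
  exact hA.prodMk hB

lemma deriv_deriv_spiral (t : ℝ) (ht : t ≠ 0) :
    deriv (deriv spiral) t =
      (-(Real.exp (1/t) * Real.sin (Real.exp (1/t)) + Real.exp (1/t)^2 * Real.cos (Real.exp (1/t))) / t^3,
       (Real.exp (1/t) * Real.cos (Real.exp (1/t)) - Real.exp (1/t)^2 * Real.sin (Real.exp (1/t))) / t^3) := by
  have hev : deriv spiral =ᶠ[nhds t] spiralD := by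
    filter_upwards [isOpen_ne.mem_nhds (x := t) ht] with s hs
    exact deriv_spiral s hs
  rw [Filter.EventuallyEq.deriv_eq hev]
  exact (hasDerivAt_spiralD t ht).deriv

/-- Closed form of the signed curvature density for `t > 0`. -/
lemma spiralQ_eq (t : ℝ) (ht : 0 < t) :
    spiralQ t = Real.exp (1/t) * (t - Real.exp (1/t)^2) /
      (t * ((t^2 + Real.exp (1/t)^2) * Real.sqrt (t^2 + Real.exp (1/t)^2))) := by
  have ht' : t ≠ 0 := ne_of_gt ht
  set e := Real.exp (1/t) with he
  have hcross : planarCross (deriv spiral t) (deriv (deriv spiral) t) = e * (t - e^2) / t^4 := by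
    rw [deriv_spiral t ht', deriv_deriv_spiral t ht']
    simp only [planarCross, spiralD]
    have hsc : Real.sin e ^ 2 + Real.cos e ^ 2 = 1 := Real.sin_sq_add_cos_sq e
    field_simp
    linear_combination (e*t - e^3) * hsc
  have hsum : (spiralD t).1 ^ 2 + (spiralD t).2 ^ 2 = (t^2 + e^2) / t^2 := by
    simp only [spiralD]
    have hsc : Real.sin e ^ 2 + Real.cos e ^ 2 = 1 := Real.sin_sq_add_cos_sq e
    field_simp
    linear_combination (t^2 + e^2) * hsc
  have hpos : 0 < t^2 + e^2 := by positivity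
  have hnorm : euclNorm (deriv spiral t) = Real.sqrt (t^2 + e^2) / t := by
    rw [deriv_spiral t ht']
    rw [euclNorm, hsum, Real.sqrt_div hpos.le, Real.sqrt_sq ht.le]
  have hsq : Real.sqrt (t^2 + e^2) ^ 2 = t^2 + e^2 := Real.sq_sqrt hpos.le
  have hsqpos : 0 < Real.sqrt (t^2 + e^2) := Real.sqrt_pos.mpr hpos
  rw [spiralQ, hcross, hnorm]
  rw [div_pow]
  rw [div_div_div_eq]
  rw [show Real.sqrt (t^2+e^2) ^ 3 = (t^2+e^2) * Real.sqrt (t^2+e^2) by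
    rw [pow_succ, hsq]]
  field_simp

/-- A globally smooth function that coincides with `spiralQ t + 1/t` for `t > 0`
and vanishes for `t ≤ 0`. -/
noncomputable def spiralF (t : ℝ) : ℝ :=
  (expNegInvGlue t)^2 * (1 + t * ((3 + 3*(t^2*(expNegInvGlue t)^2) + (t^2*(expNegInvGlue t)^2)^2) /
    ((1 + t^2*(expNegInvGlue t)^2) * Real.sqrt (1 + t^2*(expNegInvGlue t)^2) + 1))) /
  ((1 + t^2*(expNegInvGlue t)^2) * Real.sqrt (1 + t^2*(expNegInvGlue t)^2))

lemma spiralF_alg (t u ρ : ℝ) (ht : t ≠ 0) (hu : u ≠ 0) (hρ : 0 < ρ)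
    (h2 : ρ^2 = 1 + t^2*u^2) :
    u^2 * (1 + t*((3 + 3*(t^2*u^2) + (t^2*u^2)^2)/((1 + t^2*u^2)*ρ + 1))) / ((1 + t^2*u^2)*ρ)
      = (t*u^2 - 1 + ρ^3) / (t*ρ^3) := by
  have h3 : (1 + t^2*u^2)*ρ = ρ^3 := by rw [← h2]; ring
  rw [h3]
  have hne : ρ^3 + 1 ≠ 0 := by positivity
  have hg : (3 + 3*(t^2*u^2) + (t^2*u^2)^2)/(ρ^3 + 1) = (ρ^3 - 1)/(t^2*u^2) := by
    rw [div_eq_div_iff hne (by positivity)]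
    linear_combination (-(ρ^4 + ρ^2*(1+t^2*u^2) + (1+t^2*u^2)^2)) * h2
  rw [hg]
  have hρ3 : ρ^3 ≠ 0 := by positivity
  field_simp
  ring

lemma contDiff_spiralF : ContDiff ℝ (⊤ : ℕ∞) spiralF := by
  have hu : ContDiff ℝ (⊤ : ℕ∞) expNegInvGlue := expNegInvGlue.contDiff
  have hs : ContDiff ℝ (⊤ : ℕ∞) (fun t => 1 + t^2*(expNegInvGlue t)^2) :=
    contDiff_const.add ((contDiff_id.pow 2).mul (hu.pow 2))
  have hspos : ∀ t : ℝ, 0 < 1 + t^2*(expNegInvGlue t)^2 := fun t => by positivity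
  have hsqrt : ContDiff ℝ (⊤ : ℕ∞) (fun t => Real.sqrt (1 + t^2*(expNegInvGlue t)^2)) :=
    hs.sqrt (fun t => (hspos t).ne')
  have hden : ContDiff ℝ (⊤ : ℕ∞)
      (fun t => (1 + t^2*(expNegInvGlue t)^2) * Real.sqrt (1 + t^2*(expNegInvGlue t)^2)) :=
    hs.mul hsqrt
  have hdpos : ∀ t : ℝ, (1 + t^2*(expNegInvGlue t)^2) * Real.sqrt (1 + t^2*(expNegInvGlue t)^2) ≠ 0 :=
    fun t => (mul_pos (hspos t) (Real.sqrt_pos.mpr (hspos t))).ne'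
  have hnum2 : ContDiff ℝ (⊤ : ℕ∞)
      (fun t => 3 + 3*(t^2*(expNegInvGlue t)^2) + (t^2*(expNegInvGlue t)^2)^2) := by
    have h := (contDiff_id.pow 2).mul (hu.pow 2)
    exact (contDiff_const.add (contDiff_const.mul h)).add (h.pow 2)
  have hfrac : ContDiff ℝ (⊤ : ℕ∞)
      (fun t => (3 + 3*(t^2*(expNegInvGlue t)^2) + (t^2*(expNegInvGlue t)^2)^2) /
        ((1 + t^2*(expNegInvGlue t)^2) * Real.sqrt (1 + t^2*(expNegInvGlue t)^2) + 1)) := by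
    refine hnum2.div (hden.add contDiff_const) (fun t => ?_)
    have := mul_pos (hspos t) (Real.sqrt_pos.mpr (hspos t))
    positivity
  exact ((hu.pow 2).mul (contDiff_const.add (contDiff_id.mul hfrac))).div hden hdpos

lemma spiralF_nonpos (t : ℝ) (ht : t ≤ 0) : spiralF t = 0 := by
  simp [spiralF, expNegInvGlue.zero_of_nonpos ht]

lemma spiralF_pos (t : ℝ) (ht : 0 < t) : spiralF t = spiralQ t + 1/t := by
  have ht' : t ≠ 0 := ne_of_gt ht
  set u := expNegInvGlue t with hudef
  have hu : u = (Real.exp (1/t))⁻¹ := by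
    rw [hudef, expNegInvGlue, if_neg (not_le.mpr ht), Real.exp_neg, one_div]
  set e := Real.exp (1/t) with hedef
  have hepos : 0 < e := Real.exp_pos _
  have hune : u ≠ 0 := by rw [hu]; positivity
  set ρ := Real.sqrt (1 + t^2*u^2) with hρdef
  have hspos : 0 < 1 + t^2*u^2 := by positivity
  have h2 : ρ^2 = 1 + t^2*u^2 := Real.sq_sqrt hspos.le
  have hρpos : 0 < ρ := Real.sqrt_pos.mpr hspos
  have hF : spiralF t = (t*u^2 - 1 + ρ^3)/(t*ρ^3) :=
    spiralF_alg t u ρ ht' hune hρpos h2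
  have hr : Real.sqrt (t^2 + e^2) = ρ * e := by
    rw [show t^2 + e^2 = (1 + t^2*u^2) * e^2 by rw [hu]; field_simp; ring]
    rw [Real.sqrt_mul hspos.le, Real.sqrt_sq hepos.le]
  have ht2 : t^2 + e^2 = ρ^2 * e^2 := by rw [h2, hu]; field_simp; ring
  rw [hF, spiralQ_eq t ht, hr, ht2, hu]
  field_simp
  ring

/-- The function equal to `Q(t) + 1/t` for `t > 0` and to `0` for `t ≤ 0` is infinitely
differentiable. -/
theorem stmt_8 (G : ℝ → ℝ) (hG : ∀ t : ℝ, G t = if 0 < t then spiralQ t + 1 / t else 0) :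
    ContDiff ℝ (⊤ : ℕ∞) G := by
  have hGF : G = spiralF := by
    funext t
    rcases le_or_gt t 0 with h | h
    · rw [hG t, if_neg (not_lt.mpr h), spiralF_nonpos t h]
    · rw [hG t, if_pos h, spiralF_pos t h]
  rw [hGF]
  exact contDiff_spiralF
end

section
/- Let γ : (0,∞) → ℝ² be the curve γ(t) = (t cos(e^{1/t}), t sin(e^{1/t})). For p = (x,y) ∈ ℝ² with p ≠ 0, define the linear map M̂_p : ℝ² → ℝ² by M̂_p u = (⟨Jp, u⟩ p + ⟨p, u⟩ Jp)/‖p‖², where Jp = (−y, x) and ⟨·,·⟩ is the Euclidean inner product. Let R(t) = cross(γ′(t), M̂_{γ(t)} γ′(t))/‖γ′(t)‖ with cross(u,w) = u₁w₂ − u₂w₁. Then the function ℝ → ℝ defined by t ↦ t e^{−1/t} R(t) + 1 for t > 0 and by 0 for t ≤ 0 is infinitely differentiable. -/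
/-- The Euclidean inner product on `ℝ²`. -/
def euclDot (u w : ℝ × ℝ) : ℝ := u.1 * w.1 + u.2 * w.2

/-- Rotation by `π/2`: `J(x, y) = (-y, x)`. -/
def rotJ (p : ℝ × ℝ) : ℝ × ℝ := (-p.2, p.1)

/-- The endomorphism `M̂_p u = (⟨Jp, u⟩ p + ⟨p, u⟩ Jp)/‖p‖²` associated to the symmetric
tensor `M = 2r dr dφ`. -/
noncomputable def Mhat (p u : ℝ × ℝ) : ℝ × ℝ :=
  (1 / (euclNorm p) ^ 2) • (euclDot (rotJ p) u • p + euclDot p u • rotJ p)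

/-- The quantity `R(t) = cross(γ'(t), M̂_{γ(t)} γ'(t)) / ‖γ'(t)‖`. -/
noncomputable def spiralR (t : ℝ) : ℝ :=
  planarCross (deriv spiral t) (Mhat (spiral t) (deriv spiral t)) / euclNorm (deriv spiral t)

lemma deriv_spiral_s10 {t : ℝ} (ht : 0 < t) :
    deriv spiral t = (Real.cos (Real.exp (1/t)) + Real.sin (Real.exp (1/t)) * (Real.exp (1/t) / t),
      Real.sin (Real.exp (1/t)) - Real.cos (Real.exp (1/t)) * (Real.exp (1/t) / t)) := by
  have ht' := ht.ne'
  have hinv : HasDerivAt (fun x : ℝ => 1 / x) (-(1/t^2)) t := by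
    simpa [one_div] using hasDerivAt_inv ht'
  have hexp : HasDerivAt (fun x : ℝ => Real.exp (1/x)) (Real.exp (1/t) * -(1/t^2)) t := hinv.exp
  have h1 : HasDerivAt (fun x : ℝ => x * Real.cos (Real.exp (1/x)))
      (1 * Real.cos (Real.exp (1/t)) + t * (-Real.sin (Real.exp (1/t)) * (Real.exp (1/t) * -(1/t^2)))) t :=
    (hasDerivAt_id t).mul hexp.cos
  have h2 : HasDerivAt (fun x : ℝ => x * Real.sin (Real.exp (1/x)))
      (1 * Real.sin (Real.exp (1/t)) + t * (Real.cos (Real.exp (1/t)) * (Real.exp (1/t) * -(1/t^2)))) t :=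
    (hasDerivAt_id t).mul hexp.sin
  have h : HasDerivAt spiral _ t := h1.prodMk h2
  rw [h.deriv]
  refine Prod.ext ?_ ?_ <;> simp <;> field_simp <;> ring

lemma spiralR_eq {t : ℝ} (ht : 0 < t) :
    spiralR t = (1 - (Real.exp (1/t)/t)^2) / Real.sqrt (1 + (Real.exp (1/t)/t)^2) := by
  have ht' : t ≠ 0 := ht.ne'
  have hds := deriv_spiral_s10 ht
  set e := Real.exp (1/t) with he
  set c := Real.cos e with hc
  set s := Real.sin e with hs
  have hcs : c^2 + s^2 = 1 := Real.cos_sq_add_sin_sq e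
  have hsp : spiral t = (t*c, t*s) := rfl
  have hnp : euclNorm (spiral t) ^ 2 = t^2 := by
    rw [hsp]
    simp only [euclNorm]
    rw [Real.sq_sqrt (by positivity)]
    have : (t*c)^2 + (t*s)^2 = (c^2+s^2) * t^2 := by ring
    rw [this, hcs, one_mul]
  have e1 : euclDot (rotJ (spiral t)) (deriv spiral t) = -e * (c^2+s^2) := by
    rw [hsp, hds]
    simp only [euclDot, rotJ]
    field_simp
    ring
  have e2 : euclDot (spiral t) (deriv spiral t) = t * (c^2+s^2) := by
    rw [hsp, hds]
    simp only [euclDot]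
    field_simp
    ring
  rw [hcs] at e1 e2
  rw [mul_one] at e2
  have e1' : euclDot (rotJ (spiral t)) (deriv spiral t) = -e := by rw [e1]; ring
  have hM : Mhat (spiral t) (deriv spiral t) = (-(e/t)*c - s, -(e/t)*s + c) := by
    unfold Mhat
    rw [e1', e2, hnp, hsp]
    simp only [rotJ, Prod.smul_mk, smul_eq_mul, Prod.mk_add_mk]
    refine Prod.ext ?_ ?_ <;> simp only [Prod.fst, Prod.snd] <;> field_simp <;> ring
  have hcross : planarCross (deriv spiral t) (Mhat (spiral t) (deriv spiral t))
      = 1 - (e/t)^2 := by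
    rw [hM, hds]
    simp only [planarCross]
    have : (c + s * (e/t)) * (-(e/t)*s + c) - (s - c * (e/t)) * (-(e/t)*c - s)
        = (c^2+s^2) * (1 - (e/t)^2) := by ring
    rw [this, hcs, one_mul]
  have hnorm : euclNorm (deriv spiral t) = Real.sqrt (1 + (e/t)^2) := by
    rw [hds]
    simp only [euclNorm]
    congr 1
    have : (c + s * (e/t))^2 + (s - c * (e/t))^2 = (c^2+s^2) * (1 + (e/t)^2) := by ring
    rw [this, hcs, one_mul]
  rw [spiralR, hcross, hnorm]

/-- The function equal to `t e^{-1/t} R(t) + 1` for `t > 0` and to `0` for `t ≤ 0`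
is infinitely differentiable. -/
theorem stmt_10 (G : ℝ → ℝ)
    (hG : ∀ t : ℝ, G t = if 0 < t then t * Real.exp (-(1 / t)) * spiralR t + 1 else 0) :
    ContDiff ℝ (⊤ : ℕ∞) G := by
  have key : G = fun t => 1 + ((t * expNegInvGlue t)^2 - 1) / Real.sqrt ((t * expNegInvGlue t)^2 + 1) := by
    funext t
    rw [hG t]
    rcases le_or_gt t 0 with h | h
    · rw [if_neg (not_lt.mpr h), expNegInvGlue.zero_of_nonpos h]
      norm_num
    · rw [if_pos h, spiralR_eq h]
      have ht' : t ≠ 0 := h.ne'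
      have hgl : expNegInvGlue t = Real.exp (-(1/t)) := by
        simp [expNegInvGlue, not_le.mpr h, one_div]
      rw [hgl]
      set e := Real.exp (1/t) with he
      have he0 : 0 < e := Real.exp_pos _
      have hE : Real.exp (-(1/t)) = e⁻¹ := by rw [he, Real.exp_neg]
      rw [hE]
      have hq0 : 0 < Real.sqrt (t^2 + e^2) := Real.sqrt_pos.mpr (by positivity)
      have hs1 : Real.sqrt (1 + (e/t)^2) = Real.sqrt (t^2 + e^2) / t := by
        have h1 : 1 + (e/t)^2 = (t^2+e^2)/t^2 := by field_simp
        rw [h1, Real.sqrt_div (by positivity), Real.sqrt_sq h.le]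
      have hs2 : Real.sqrt ((t * e⁻¹)^2 + 1) = Real.sqrt (t^2 + e^2) / e := by
        have h2 : (t * e⁻¹)^2 + 1 = (t^2+e^2)/e^2 := by field_simp
        rw [h2, Real.sqrt_div (by positivity), Real.sqrt_sq he0.le]
      rw [hs1, hs2]
      field_simp
      ring
  rw [key]
  have hw : ContDiff ℝ (⊤:ℕ∞) fun t : ℝ => t * expNegInvGlue t :=
    contDiff_id.mul expNegInvGlue.contDiff
  have hq : ContDiff ℝ (⊤:ℕ∞) fun t : ℝ => (t * expNegInvGlue t)^2 + 1 :=
    (hw.pow 2).add contDiff_const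
  have hpos : ∀ t : ℝ, (t * expNegInvGlue t)^2 + 1 ≠ 0 := fun t => by positivity
  exact contDiff_const.add (((hw.pow 2).sub contDiff_const).div (hq.sqrt hpos)
    (fun t => (Real.sqrt_pos.mpr (by positivity)).ne'))
end

section
/- Let γ : ℝ → ℝ³ be infinitely differentiable with ‖γ′(t)‖ = 1 for all t. Then the following are equivalent: (i) for all t, γ′′′(t) = −‖γ′′(t)‖² γ′(t); (ii) the vector-valued function t ↦ γ′(t) × γ′′(t) (Euclidean cross product in ℝ³) is constant. -/
/-- The Euclidean cross product in `ℝ³`. -/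
def cross3 (u v : EuclideanSpace ℝ (Fin 3)) : EuclideanSpace ℝ (Fin 3) :=
  WithLp.toLp 2 ![u 1 * v 2 - u 2 * v 1, u 2 * v 0 - u 0 * v 2, u 0 * v 1 - u 1 * v 0]

lemma hasDerivAt_comp_apply {f : ℝ → EuclideanSpace ℝ (Fin 3)} {f' : EuclideanSpace ℝ (Fin 3)}
    {t : ℝ} (hf : HasDerivAt f f' t) (i : Fin 3) :
    HasDerivAt (fun s => f s i) (f' i) t := by
  exact (EuclideanSpace.proj i).hasFDerivAt.comp_hasDerivAt t hf

lemma hasDerivAt_cross {f g : ℝ → EuclideanSpace ℝ (Fin 3)} {f' g' : EuclideanSpace ℝ (Fin 3)}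
    {t : ℝ} (hf : HasDerivAt f f' t) (hg : HasDerivAt g g' t) :
    HasDerivAt (fun s => cross3 (f s) (g s)) (cross3 f' (g t) + cross3 (f t) g') t := by
  have h : ∀ i : Fin 3, HasDerivAt (fun s => cross3 (f s) (g s) i)
      ((cross3 f' (g t) + cross3 (f t) g') i) t := by
    intro i
    have h0f := hasDerivAt_comp_apply hf 0
    have h1f := hasDerivAt_comp_apply hf 1
    have h2f := hasDerivAt_comp_apply hf 2
    have h0g := hasDerivAt_comp_apply hg 0
    have h1g := hasDerivAt_comp_apply hg 1
    have h2g := hasDerivAt_comp_apply hg 2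
    fin_cases i
    · convert (h1f.mul h2g).sub (h2f.mul h1g) using 1
      all_goals try rfl
      simp [cross3, PiLp.add_apply]; ring
    · convert (h2f.mul h0g).sub (h0f.mul h2g) using 1
      all_goals try rfl
      simp [cross3, PiLp.add_apply]; ring
    · convert (h0f.mul h1g).sub (h1f.mul h0g) using 1
      all_goals try rfl
      simp [cross3, PiLp.add_apply]; ring
  have hp : HasDerivAt (fun s => (fun i => cross3 (f s) (g s) i : Fin 3 → ℝ))
      (fun i => (cross3 f' (g t) + cross3 (f t) g') i) t := hasDerivAt_pi.mpr h
  have := ((EuclideanSpace.equiv (Fin 3) ℝ).symm : (Fin 3 → ℝ) →L[ℝ]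
      EuclideanSpace ℝ (Fin 3)).hasFDerivAt.comp_hasDerivAt t hp
  exact this

/-- For a smooth unit-speed curve `γ` in Euclidean `ℝ³`, the flat conformal geodesic
equation `γ''' = -‖γ''‖² γ'` holds iff `t ↦ γ'(t) × γ''(t)` is constant. -/
theorem stmt_13 (γ : ℝ → EuclideanSpace ℝ (Fin 3)) (hγ : ContDiff ℝ (⊤ : ℕ∞) γ)
    (hunit : ∀ t : ℝ, ‖deriv γ t‖ = 1) :
    (∀ t : ℝ, deriv (deriv (deriv γ)) t = -(‖deriv (deriv γ) t‖ ^ 2) • deriv γ t) ↔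
      (∃ c : EuclideanSpace ℝ (Fin 3),
        ∀ t : ℝ, cross3 (deriv γ t) (deriv (deriv γ) t) = c) := by
  have hu : ContDiff ℝ (⊤ : ℕ∞) (deriv γ) := (contDiff_infty_iff_deriv.mp hγ).2
  have ha : ContDiff ℝ (⊤ : ℕ∞) (deriv (deriv γ)) := (contDiff_infty_iff_deriv.mp hu).2
  have hu' : ∀ t, HasDerivAt (deriv γ) (deriv (deriv γ) t) t :=
    fun t => (hu.differentiable (by simp) t).hasDerivAt
  have ha' : ∀ t, HasDerivAt (deriv (deriv γ)) (deriv (deriv (deriv γ)) t) t :=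
    fun t => (ha.differentiable (by simp) t).hasDerivAt
  -- inner product facts
  have hinner_uu : ∀ t, (inner ℝ (deriv γ t) (deriv γ t) : ℝ) = 1 := by
    intro t
    rw [real_inner_self_eq_norm_sq, hunit t]; norm_num
  have hinner_ua : ∀ t, (inner ℝ (deriv γ t) (deriv (deriv γ) t) : ℝ) = 0 := by
    intro t
    have h1 : HasDerivAt (fun s => (inner ℝ (deriv γ s) (deriv γ s) : ℝ))
        ((inner ℝ (deriv γ t) (deriv (deriv γ) t) : ℝ) + inner ℝ (deriv (deriv γ) t) (deriv γ t)) t :=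
      (hu' t).inner ℝ (hu' t)
    have h2 : HasDerivAt (fun _ : ℝ => (1 : ℝ)) 0 t := hasDerivAt_const t 1
    have heq : (fun s => (inner ℝ (deriv γ s) (deriv γ s) : ℝ)) = fun _ => (1 : ℝ) :=
      funext fun s => hinner_uu s
    rw [heq] at h1
    have := h1.unique h2
    have hsymm : (inner ℝ (deriv (deriv γ) t) (deriv γ t) : ℝ)
        = inner ℝ (deriv γ t) (deriv (deriv γ) t) := real_inner_comm _ _
    linarith [this, hsymm.symm ▸ this]
  have hinner_uj : ∀ t, (inner ℝ (deriv γ t) (deriv (deriv (deriv γ)) t) : ℝ)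
      = -(‖deriv (deriv γ) t‖ ^ 2) := by
    intro t
    have h1 : HasDerivAt (fun s => (inner ℝ (deriv γ s) (deriv (deriv γ) s) : ℝ))
        ((inner ℝ (deriv γ t) (deriv (deriv (deriv γ)) t) : ℝ)
          + inner ℝ (deriv (deriv γ) t) (deriv (deriv γ) t)) t :=
      (hu' t).inner ℝ (ha' t)
    have h2 : HasDerivAt (fun _ : ℝ => (0 : ℝ)) 0 t := hasDerivAt_const t 0
    have heq : (fun s => (inner ℝ (deriv γ s) (deriv (deriv γ) s) : ℝ)) = fun _ => (0 : ℝ) :=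
      funext fun s => hinner_ua s
    rw [heq] at h1
    have h3 := h1.unique h2
    have h4 : (inner ℝ (deriv (deriv γ) t) (deriv (deriv γ) t) : ℝ) = ‖deriv (deriv γ) t‖ ^ 2 :=
      real_inner_self_eq_norm_sq _
    linarith
  constructor
  · intro hgeo
    refine ⟨cross3 (deriv γ 0) (deriv (deriv γ) 0), fun t => ?_⟩
    have hF : ∀ s, HasDerivAt (fun r => cross3 (deriv γ r) (deriv (deriv γ) r)) 0 s := by
      intro s
      have h := hasDerivAt_cross (hu' s) (ha' s)
      have hz : cross3 (deriv (deriv γ) s) (deriv (deriv γ) s)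
          + cross3 (deriv γ s) (deriv (deriv (deriv γ)) s) = 0 := by
        rw [hgeo s]
        ext i
        fin_cases i <;>
          simp [cross3, PiLp.add_apply, PiLp.smul_apply, smul_eq_mul] <;> ring
      rwa [hz] at h
    have hdiff : Differentiable ℝ (fun r => cross3 (deriv γ r) (deriv (deriv γ) r)) :=
      fun s => (hF s).differentiableAt
    have hder : ∀ s, deriv (fun r => cross3 (deriv γ r) (deriv (deriv γ) r)) s = 0 :=
      fun s => (hF s).deriv
    exact is_const_of_deriv_eq_zero hdiff hder t 0
  · rintro ⟨c, hc⟩ t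
    have hF : HasDerivAt (fun r => cross3 (deriv γ r) (deriv (deriv γ) r)) 0 t := by
      have heq : (fun r => cross3 (deriv γ r) (deriv (deriv γ) r)) = fun _ => c :=
        funext hc
      rw [heq]; exact hasDerivAt_const t c
    have h := hasDerivAt_cross (hu' t) (ha' t)
    have hz : cross3 (deriv (deriv γ) t) (deriv (deriv γ) t)
        + cross3 (deriv γ t) (deriv (deriv (deriv γ)) t) = 0 := h.unique hF
    -- pointwise algebra
    set U := deriv γ t with hU
    set A := deriv (deriv γ) t with hA
    set J := deriv (deriv (deriv γ)) t with hJ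
    have hi : ∀ i : Fin 3, (cross3 A A + cross3 U J) i = 0 := by
      intro i; rw [hz]; rfl
    have e0 : U 1 * J 2 - U 2 * J 1 = 0 := by
      have := hi 0; simp [cross3, PiLp.add_apply] at this; linear_combination this
    have e1 : U 2 * J 0 - U 0 * J 2 = 0 := by
      have := hi 1; simp [cross3, PiLp.add_apply] at this; linear_combination this
    have e2 : U 0 * J 1 - U 1 * J 0 = 0 := by
      have := hi 2; simp [cross3, PiLp.add_apply] at this; linear_combination this
    have hnorm : U 0 * U 0 + U 1 * U 1 + U 2 * U 2 = 1 := by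
      have := hinner_uu t
      rw [PiLp.inner_apply, Fin.sum_univ_three] at this
      simp only [RCLike.inner_apply, conj_trivial] at this
      linear_combination this
    have hdot : U 0 * J 0 + U 1 * J 1 + U 2 * J 2 = -(‖A‖ ^ 2) := by
      have := hinner_uj t
      rw [PiLp.inner_apply, Fin.sum_univ_three] at this
      simp only [RCLike.inner_apply, conj_trivial] at this
      linear_combination this
    ext i
    fin_cases i
    · show J 0 = (-(‖A‖ ^ 2) • U) 0
      simp only [PiLp.smul_apply, smul_eq_mul]
      linear_combination U 0 * hdot - J 0 * hnorm - U 1 * e2 + U 2 * e1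
    · show J 1 = (-(‖A‖ ^ 2) • U) 1
      simp only [PiLp.smul_apply, smul_eq_mul]
      linear_combination U 1 * hdot - J 1 * hnorm + U 0 * e2 - U 2 * e0
    · show J 2 = (-(‖A‖ ^ 2) • U) 2
      simp only [PiLp.smul_apply, smul_eq_mul]
      linear_combination U 2 * hdot - J 2 * hnorm - U 0 * e1 + U 1 * e0
end

section
/- Let H : ℝ → ℝ be infinitely differentiable with H(t) = 0 for all t ≤ 0. Define g : ℝ³ → (3×3 real symmetric matrices) as follows: for (x,y,z) with r = √(x²+y²) > 0, set s = H(r) and g₁₁ = 1 + s²z⁴ − 4 s z² x y / r², g₂₂ = 1 + s²z⁴ + 4 s z² x y / r², g₁₂ = g₂₁ = 2 s z² (x² − y²)/r², g₃₃ = 1, g₁₃ = g₃₁ = g₂₃ = g₃₂ = 0; and for x = y = 0 set g to be the identity matrix. Then g is infinitely differentiable on all of ℝ³ (every entry is a smooth function of (x,y,z)). -/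
open Filter Topology Real ContDiff

/-- `f` vanishes on the nonpositive half line. -/
def MyFlat (f : ℝ → ℝ) : Prop := ∀ t ≤ (0:ℝ), f t = 0

lemma myflat_lim {φ : ℝ → ℝ} {l : ℝ} (hφ : Tendsto φ (𝓝[≠] (0:ℝ)) (𝓝 l))
    (h0 : ∀ t < (0:ℝ), φ t = 0) : l = 0 := by
  have h1 : Tendsto φ (𝓝[<] (0:ℝ)) (𝓝 l) :=
    hφ.mono_left (nhdsWithin_mono _ (fun x hx => ne_of_lt hx))
  have h2 : Tendsto φ (𝓝[<] (0:ℝ)) (𝓝 0) := by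
    apply Tendsto.congr' _ tendsto_const_nhds
    filter_upwards [self_mem_nhdsWithin] with x hx
    exact (h0 x hx).symm
  exact tendsto_nhds_unique h1 h2

lemma myflat_deriv {f : ℝ → ℝ} (hf : ContDiff ℝ (⊤:ℕ∞) f) (h : MyFlat f) :
    MyFlat (deriv f) := by
  intro t ht
  rcases lt_or_eq_of_le ht with ht' | rfl
  · have hev : f =ᶠ[𝓝 t] (fun _ => (0:ℝ)) := by
      filter_upwards [Iio_mem_nhds ht'] with x hx
      exact h x (le_of_lt hx)
    rw [hev.deriv_eq, deriv_const]
  · have hd : HasDerivAt f (deriv f 0) 0 :=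
      ((hf.differentiable (by simp)) 0).hasDerivAt
    have hs := hasDerivAt_iff_tendsto_slope.1 hd
    refine myflat_lim hs (fun x hx => ?_)
    rw [slope_def_field, h x (le_of_lt hx), h 0 le_rfl]
    simp

lemma myflat_tendsto (k : ℕ) : ∀ (f : ℝ → ℝ), ContDiff ℝ (⊤:ℕ∞) f → MyFlat f →
    Tendsto (fun t => f t / t ^ k) (𝓝[≠] (0:ℝ)) (𝓝 0) := by
  induction k with
  | zero =>
    intro f hf h0
    simp only [pow_zero, div_one]
    have := (hf.continuous.tendsto 0).mono_left (nhdsWithin_le_nhds (s := {(0:ℝ)}ᶜ))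
    rwa [h0 0 le_rfl] at this
  | succ k ih =>
    intro f hf h0
    have hf' : ContDiff ℝ (⊤:ℕ∞) (deriv f) := (contDiff_infty_iff_deriv.1 (by exact_mod_cast hf)).2
    have h0' : MyFlat (deriv f) := myflat_deriv hf h0
    have hdiv : Tendsto (fun x => deriv f x / ((k+1) * x ^ k)) (𝓝[≠] (0:ℝ)) (𝓝 0) := by
      have := (ih (deriv f) hf' h0').div_const ((k:ℝ)+1)
      rw [zero_div] at this
      refine this.congr (fun x => ?_)
      rw [div_div, mul_comm]
    have := HasDerivAt.lhopital_zero_nhdsNE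
      (f := f) (g := fun t => t ^ (k+1)) (f' := deriv f) (g' := fun t => ((k:ℝ)+1) * t ^ k)
      (by filter_upwards with x; exact ((hf.differentiable (by simp)) x).hasDerivAt)
      (by filter_upwards with x; simpa using hasDerivAt_pow (k+1) x)
      (by filter_upwards [self_mem_nhdsWithin] with x (hx : x ≠ 0);
          exact mul_ne_zero (by positivity) (pow_ne_zero _ hx))
      (by have := (hf.continuous.tendsto 0).mono_left (nhdsWithin_le_nhds (s := {(0:ℝ)}ᶜ));
          rwa [h0 0 le_rfl] at this)
      (by have : Tendsto (fun t : ℝ => t ^ (k+1)) (𝓝 0) (𝓝 0) := by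
            simpa using (continuous_pow (k+1)).tendsto (0:ℝ)
          exact this.mono_left nhdsWithin_le_nhds)
      hdiv
    exact this

lemma contAt_of_punctured {φ : ℝ → ℝ} {a : ℝ} (h : Tendsto φ (𝓝[≠] a) (𝓝 (φ a))) :
    ContinuousAt φ a := by
  rw [ContinuousAt, ← nhdsNE_sup_pure a]
  exact Tendsto.sup h (by simpa using tendsto_pure_nhds φ a)

lemma myflat_val0 {f : ℝ → ℝ} (h0 : MyFlat f) (k : ℕ) : f 0 / (0:ℝ) ^ k = 0 := by
  cases k with
  | zero => simp [h0 0 le_rfl]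
  | succ k => simp

lemma myflat_quot (n : ℕ) : ∀ (k : ℕ) (f : ℝ → ℝ), ContDiff ℝ (⊤:ℕ∞) f → MyFlat f →
    ContDiff ℝ (n : ℕ∞) (fun t => f t / t ^ k) := by
  induction n with
  | zero =>
    intro k f hf h0
    suffices h : Continuous (fun t => f t / t ^ k) by
      have := (contDiff_zero (𝕜 := ℝ)).2 h; exact_mod_cast this
    refine continuous_iff_continuousAt.2 (fun t => ?_)
    by_cases ht : t = 0
    · subst ht
      apply contAt_of_punctured
      rw [myflat_val0 h0 k]
      exact myflat_tendsto k f hf h0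
    · exact (hf.continuous.continuousAt).div (continuousAt_pow t k) (pow_ne_zero _ ht)
  | succ n ih =>
    intro k f hf h0
    have hf' : ContDiff ℝ (⊤:ℕ∞) (deriv f) := (contDiff_infty_iff_deriv.1 (by exact_mod_cast hf)).2
    have h0' : MyFlat (deriv f) := myflat_deriv hf h0
    have hd0 : HasDerivAt (fun t => f t / t ^ k) 0 0 := by
      rw [hasDerivAt_iff_tendsto_slope]
      have := myflat_tendsto (k+1) f hf h0
      refine this.congr' ?_
      filter_upwards [self_mem_nhdsWithin] with x (hx : x ≠ 0)
      rw [slope_def_field, myflat_val0 h0 k]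
      rw [sub_zero, sub_zero, div_div, ← pow_succ]
    have hdiff : Differentiable ℝ (fun t => f t / t ^ k) := by
      intro t
      by_cases ht : t = 0
      · subst ht; exact hd0.differentiableAt
      · exact (((hf.differentiable (by simp)) t).div
          (differentiableAt_pow k) (pow_ne_zero _ ht))
    have hderiv : deriv (fun t => f t / t ^ k) =
        fun t => deriv f t / t ^ k - (k:ℝ) * (f t / t ^ (k+1)) := by
      funext t
      by_cases ht : t = 0
      · subst ht
        rw [hd0.deriv, myflat_val0 h0' k]
        simp
      · have h1 : HasDerivAt f (deriv f t) t :=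
          ((hf.differentiable (by simp)) t).hasDerivAt
        have h2 : HasDerivAt (fun s : ℝ => s ^ k) ((k:ℝ) * t ^ (k-1)) t := by
          simpa using hasDerivAt_pow k t
        have := (h1.div h2 (pow_ne_zero _ ht)).deriv
        rw [show (fun t => f t / t ^ k) = (f / fun s : ℝ => s ^ k) from rfl, this]
        cases k with
        | zero => simp
        | succ m =>
          have hm : m + 1 - 1 = m := rfl
          rw [hm]
          field_simp
          ring
    suffices h : ContDiff ℝ ((n : WithTop ℕ∞) + 1) (fun t => f t / t ^ k) by
      exact_mod_cast h
    rw [contDiff_succ_iff_deriv]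
    refine ⟨hdiff, ?_, ?_⟩
    · intro h; exact absurd h (by simp)
    · rw [hderiv]
      have h1 := (ih k (deriv f) hf' h0').sub
        ((contDiff_const (c := (k:ℝ))).mul (ih (k+1) f hf h0))
      exact_mod_cast h1

lemma myflat_quot' {f : ℝ → ℝ} (hf : ContDiff ℝ (⊤:ℕ∞) f) (h0 : MyFlat f) (k : ℕ) :
    ContDiff ℝ (⊤:ℕ∞) (fun t => f t / t ^ k) := by
  have : ContDiff ℝ (∞ : WithTop ℕ∞) (fun t => f t / t ^ k) :=
    contDiff_infty.2 (fun n => by exact_mod_cast myflat_quot n k f hf h0)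
  exact_mod_cast this

lemma myflat_sqrt (n : ℕ) : ∀ (f : ℝ → ℝ), ContDiff ℝ (⊤:ℕ∞) f → MyFlat f →
    ContDiff ℝ (n : ℕ∞) (fun u => f (Real.sqrt u)) := by
  induction n with
  | zero =>
    intro f hf h0
    suffices h : Continuous (fun u => f (Real.sqrt u)) by
      have := (contDiff_zero (𝕜 := ℝ)).2 h; exact_mod_cast this
    exact hf.continuous.comp Real.continuous_sqrt
  | succ n ih =>
    intro f hf h0
    have hf' : ContDiff ℝ (⊤:ℕ∞) (deriv f) := (contDiff_infty_iff_deriv.1 (by exact_mod_cast hf)).2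
    have h0' : MyFlat (deriv f) := myflat_deriv hf h0
    -- the function q1 = deriv f t / t is smooth and flat
    have hq1 : ContDiff ℝ (⊤:ℕ∞) (fun t => deriv f t / t) := by
      have := myflat_quot' hf' h0' 1
      simpa [pow_one] using this
    have hq1flat : MyFlat (fun t => deriv f t / t) := by
      intro t ht
      show deriv f t / t = 0
      rw [h0' t ht, zero_div]
    -- q2 = f t / t^2 is continuous with value 0 at 0
    have hq2cont : Continuous (fun t => f t / t ^ 2) := (myflat_quot' hf h0 2).continuous
    -- derivative at 0
    have hd0 : HasDerivAt (fun u => f (Real.sqrt u)) 0 0 := by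
      rw [hasDerivAt_iff_tendsto_slope]
      have hc : Tendsto (fun u => f (Real.sqrt u) / (Real.sqrt u) ^ 2) (𝓝[≠] (0:ℝ)) (𝓝 0) := by
        have : Tendsto (fun u => f (Real.sqrt u) / (Real.sqrt u) ^ 2) (𝓝 (0:ℝ))
            (𝓝 (f (Real.sqrt 0) / (Real.sqrt 0) ^ 2)) :=
          (hq2cont.comp Real.continuous_sqrt).tendsto 0
        rw [Real.sqrt_zero] at this
        rw [myflat_val0 h0 2] at this
        exact this.mono_left nhdsWithin_le_nhds
      refine hc.congr' ?_
      filter_upwards [self_mem_nhdsWithin] with u (hu : u ≠ 0)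
      rcases lt_or_gt_of_ne hu with hu' | hu'
      · rw [slope_def_field, Real.sqrt_zero, Real.sqrt_eq_zero'.2 (le_of_lt hu'), h0 0 le_rfl]
        simp
      · rw [slope_def_field, Real.sqrt_zero, h0 0 le_rfl, Real.sq_sqrt (le_of_lt hu')]
        simp
    -- differentiability
    have hdiff : Differentiable ℝ (fun u => f (Real.sqrt u)) := by
      intro u
      rcases lt_trichotomy u 0 with hu | rfl | hu
      · have hev : (fun u => f (Real.sqrt u)) =ᶠ[𝓝 u] (fun _ => (0:ℝ)) := by
          filter_upwards [Iio_mem_nhds hu] with v hv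
          rw [Real.sqrt_eq_zero'.2 (le_of_lt hv)]
          exact h0 0 le_rfl
        exact (differentiableAt_const (0:ℝ)).congr_of_eventuallyEq hev
      · exact hd0.differentiableAt
      · have hs : HasDerivAt Real.sqrt (1 / (2 * Real.sqrt u)) u :=
          Real.hasDerivAt_sqrt (ne_of_gt hu)
        exact ((((hf.differentiable (by simp)) _).hasDerivAt).comp u
          hs).differentiableAt
    -- deriv formula
    have hderiv : deriv (fun u => f (Real.sqrt u)) =
        fun u => (deriv f (Real.sqrt u) / Real.sqrt u) / 2 := by
      funext u
      rcases lt_trichotomy u 0 with hu | rfl | hu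
      · have hev : (fun u => f (Real.sqrt u)) =ᶠ[𝓝 u] (fun _ => (0:ℝ)) := by
          filter_upwards [Iio_mem_nhds hu] with v hv
          rw [Real.sqrt_eq_zero'.2 (le_of_lt hv)]
          exact h0 0 le_rfl
        rw [hev.deriv_eq, deriv_const, Real.sqrt_eq_zero'.2 (le_of_lt hu)]
        simp
      · rw [hd0.deriv, Real.sqrt_zero]
        simp
      · have hs : HasDerivAt Real.sqrt (1 / (2 * Real.sqrt u)) u :=
          Real.hasDerivAt_sqrt (ne_of_gt hu)
        have hc : HasDerivAt (fun u => f (Real.sqrt u)) (deriv f (Real.sqrt u) * (1 / (2 * Real.sqrt u))) u :=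
          (((hf.differentiable (by simp)) _).hasDerivAt).comp u hs
        rw [hc.deriv, mul_one_div, div_div, mul_comm]
    suffices h : ContDiff ℝ ((n : WithTop ℕ∞) + 1) (fun u => f (Real.sqrt u)) by
      exact_mod_cast h
    rw [contDiff_succ_iff_deriv]
    refine ⟨hdiff, fun h => absurd h (by simp), ?_⟩
    rw [hderiv]
    have h1 := (ih (fun t => deriv f t / t) hq1 hq1flat).div_const 2
    exact_mod_cast h1

/-- Let `H : ℝ → ℝ` be infinitely differentiable with `H(t) = 0` for `t ≤ 0`. The matrix
field `g : ℝ³ → Matrix (Fin 3) (Fin 3) ℝ` given, for `r = √(x²+y²) > 0` and `s = H(r)`, by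
`g₁₁ = 1 + s²z⁴ - 4sz²xy/r²`, `g₂₂ = 1 + s²z⁴ + 4sz²xy/r²`, `g₁₂ = g₂₁ = 2sz²(x²-y²)/r²`,
`g₃₃ = 1`, `g₁₃ = g₃₁ = g₂₃ = g₃₂ = 0`, and equal to the identity when `x = y = 0`,
has all entries infinitely differentiable on `ℝ³`. -/
theorem stmt_14 (H : ℝ → ℝ) (hH : ContDiff ℝ (⊤ : ℕ∞) H) (hH0 : ∀ t ≤ (0 : ℝ), H t = 0)
    (g : ℝ × ℝ × ℝ → Matrix (Fin 3) (Fin 3) ℝ)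
    (hg : ∀ x y z : ℝ, 0 < Real.sqrt (x ^ 2 + y ^ 2) →
      g (x, y, z) =
        !![1 + (H (Real.sqrt (x ^ 2 + y ^ 2))) ^ 2 * z ^ 4 -
              4 * H (Real.sqrt (x ^ 2 + y ^ 2)) * z ^ 2 * x * y / (Real.sqrt (x ^ 2 + y ^ 2)) ^ 2,
            2 * H (Real.sqrt (x ^ 2 + y ^ 2)) * z ^ 2 * (x ^ 2 - y ^ 2) /
              (Real.sqrt (x ^ 2 + y ^ 2)) ^ 2, 0;
            2 * H (Real.sqrt (x ^ 2 + y ^ 2)) * z ^ 2 * (x ^ 2 - y ^ 2) /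
              (Real.sqrt (x ^ 2 + y ^ 2)) ^ 2,
            1 + (H (Real.sqrt (x ^ 2 + y ^ 2))) ^ 2 * z ^ 4 +
              4 * H (Real.sqrt (x ^ 2 + y ^ 2)) * z ^ 2 * x * y / (Real.sqrt (x ^ 2 + y ^ 2)) ^ 2,
            0;
            0, 0, 1])
    (hg0 : ∀ z : ℝ, g (0, 0, z) = 1) :
    ∀ i j : Fin 3, ContDiff ℝ (⊤ : ℕ∞) (fun p : ℝ × ℝ × ℝ => g p i j) := by
  classical
  -- the two key radial functions
  have hΦ : ContDiff ℝ (⊤:ℕ∞) (fun u : ℝ => H (Real.sqrt u)) := by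
    have : ContDiff ℝ ∞ (fun u : ℝ => H (Real.sqrt u)) :=
      contDiff_infty.2 (fun n => by exact_mod_cast myflat_sqrt n H hH hH0)
    exact_mod_cast this
  have hΦflat : MyFlat (fun u : ℝ => H (Real.sqrt u)) := by
    intro u hu
    show H (Real.sqrt u) = 0
    rw [Real.sqrt_eq_zero'.2 hu]
    exact hH0 0 le_rfl
  have hΨ : ContDiff ℝ (⊤:ℕ∞) (fun u : ℝ => H (Real.sqrt u) / u) := by
    have := myflat_quot' hΦ hΦflat 1
    simpa [pow_one] using this
  -- base smooth coordinates
  have hx : ContDiff ℝ (⊤:ℕ∞) (fun p : ℝ×ℝ×ℝ => p.1) := contDiff_fst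
  have hy : ContDiff ℝ (⊤:ℕ∞) (fun p : ℝ×ℝ×ℝ => p.2.1) := contDiff_fst.comp contDiff_snd
  have hz : ContDiff ℝ (⊤:ℕ∞) (fun p : ℝ×ℝ×ℝ => p.2.2) := contDiff_snd.comp contDiff_snd
  have hr2 : ContDiff ℝ (⊤:ℕ∞) (fun p : ℝ×ℝ×ℝ => p.1 ^ 2 + p.2.1 ^ 2) :=
    (hx.pow 2).add (hy.pow 2)
  have hA : ContDiff ℝ (⊤:ℕ∞) (fun p : ℝ×ℝ×ℝ => H (Real.sqrt (p.1 ^ 2 + p.2.1 ^ 2))) :=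
    hΦ.comp hr2
  have hB : ContDiff ℝ (⊤:ℕ∞)
      (fun p : ℝ×ℝ×ℝ => H (Real.sqrt (p.1 ^ 2 + p.2.1 ^ 2)) / (p.1 ^ 2 + p.2.1 ^ 2)) :=
    hΨ.comp hr2
  -- the global smooth formula for g
  have key : ∀ p : ℝ×ℝ×ℝ, g p =
      !![1 + (H (Real.sqrt (p.1 ^ 2 + p.2.1 ^ 2))) ^ 2 * p.2.2 ^ 4 -
            4 * p.2.2 ^ 2 * p.1 * p.2.1 *
              (H (Real.sqrt (p.1 ^ 2 + p.2.1 ^ 2)) / (p.1 ^ 2 + p.2.1 ^ 2)),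
          2 * p.2.2 ^ 2 * (p.1 ^ 2 - p.2.1 ^ 2) *
              (H (Real.sqrt (p.1 ^ 2 + p.2.1 ^ 2)) / (p.1 ^ 2 + p.2.1 ^ 2)), 0;
          2 * p.2.2 ^ 2 * (p.1 ^ 2 - p.2.1 ^ 2) *
              (H (Real.sqrt (p.1 ^ 2 + p.2.1 ^ 2)) / (p.1 ^ 2 + p.2.1 ^ 2)),
          1 + (H (Real.sqrt (p.1 ^ 2 + p.2.1 ^ 2))) ^ 2 * p.2.2 ^ 4 +
            4 * p.2.2 ^ 2 * p.1 * p.2.1 *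
              (H (Real.sqrt (p.1 ^ 2 + p.2.1 ^ 2)) / (p.1 ^ 2 + p.2.1 ^ 2)), 0;
          0, 0, 1] := by
    rintro ⟨x, y, z⟩
    by_cases h : 0 < Real.sqrt (x ^ 2 + y ^ 2)
    · rw [hg x y z h]
      have hnn : (0:ℝ) ≤ x ^ 2 + y ^ 2 := by positivity
      have hs2 : (Real.sqrt (x ^ 2 + y ^ 2)) ^ 2 = x ^ 2 + y ^ 2 := Real.sq_sqrt hnn
      rw [hs2]
      ext i j
      fin_cases i <;> fin_cases j <;>
        simp only [Matrix.cons_val', Matrix.cons_val_zero, Matrix.cons_val_one,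
          Matrix.head_cons, Matrix.head_fin_const, Matrix.empty_val',
          Matrix.cons_val_fin_one, Fin.mk_zero, Fin.mk_one] <;>
        ring
    · have hxy : x ^ 2 + y ^ 2 ≤ 0 := by
        by_contra hc
        exact h (Real.sqrt_pos.2 (lt_of_not_ge hc))
      have hx0 : x = 0 := by nlinarith [sq_nonneg x, sq_nonneg y]
      have hy0 : y = 0 := by nlinarith [sq_nonneg x, sq_nonneg y]
      subst hx0; subst hy0
      rw [hg0 z]
      have h0 : H 0 = 0 := hH0 0 le_rfl
      rw [Matrix.one_fin_three]
      norm_num [h0]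
  intro i j
  have hrepr : (fun p : ℝ×ℝ×ℝ => g p i j) = fun p : ℝ×ℝ×ℝ =>
      (!![1 + (H (Real.sqrt (p.1 ^ 2 + p.2.1 ^ 2))) ^ 2 * p.2.2 ^ 4 -
            4 * p.2.2 ^ 2 * p.1 * p.2.1 *
              (H (Real.sqrt (p.1 ^ 2 + p.2.1 ^ 2)) / (p.1 ^ 2 + p.2.1 ^ 2)),
          2 * p.2.2 ^ 2 * (p.1 ^ 2 - p.2.1 ^ 2) *
              (H (Real.sqrt (p.1 ^ 2 + p.2.1 ^ 2)) / (p.1 ^ 2 + p.2.1 ^ 2)), 0;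
          2 * p.2.2 ^ 2 * (p.1 ^ 2 - p.2.1 ^ 2) *
              (H (Real.sqrt (p.1 ^ 2 + p.2.1 ^ 2)) / (p.1 ^ 2 + p.2.1 ^ 2)),
          1 + (H (Real.sqrt (p.1 ^ 2 + p.2.1 ^ 2))) ^ 2 * p.2.2 ^ 4 +
            4 * p.2.2 ^ 2 * p.1 * p.2.1 *
              (H (Real.sqrt (p.1 ^ 2 + p.2.1 ^ 2)) / (p.1 ^ 2 + p.2.1 ^ 2)), 0;
          0, 0, 1]) i j := funext fun p => by rw [key p]
  rw [hrepr]
  fin_cases i <;> fin_cases j <;>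
    simp only [Matrix.cons_val', Matrix.cons_val_zero, Matrix.cons_val_one,
      Matrix.head_cons, Matrix.head_fin_const, Matrix.empty_val',
      Matrix.cons_val_fin_one, Fin.mk_zero, Fin.mk_one]
  · exact (contDiff_const.add ((hA.pow 2).mul (hz.pow 4))).sub
      ((((contDiff_const.mul (hz.pow 2)).mul hx).mul hy).mul hB)
  · exact ((contDiff_const.mul (hz.pow 2)).mul ((hx.pow 2).sub (hy.pow 2))).mul hB
  · exact contDiff_const
  · exact ((contDiff_const.mul (hz.pow 2)).mul ((hx.pow 2).sub (hy.pow 2))).mul hB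
  · exact (contDiff_const.add ((hA.pow 2).mul (hz.pow 4))).add
      ((((contDiff_const.mul (hz.pow 2)).mul hx).mul hy).mul hB)
  · exact contDiff_const
  · exact contDiff_const
  · exact contDiff_const
  · exact contDiff_const
end

section
/- Let H : ℝ → ℝ and let (x,y,z) ∈ ℝ³ with r = √(x²+y²) > 0 and |H(r)| z² < 1. Then the symmetric matrix g(x,y,z) with entries g₁₁ = 1 + H(r)²z⁴ − 4 H(r) z² x y / r², g₂₂ = 1 + H(r)²z⁴ + 4 H(r) z² x y / r², g₁₂ = g₂₁ = 2 H(r) z² (x² − y²)/r², g₃₃ = 1, g₁₃ = g₂₃ = 0 is positive definite. -/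
/-- For `r = √(x² + y²) > 0` and `|H(r)| z² < 1`, the symmetric matrix with entries
`g₁₁ = 1 + H(r)²z⁴ - 4H(r)z²xy/r²`, `g₂₂ = 1 + H(r)²z⁴ + 4H(r)z²xy/r²`,
`g₁₂ = g₂₁ = 2H(r)z²(x² - y²)/r²`, `g₃₃ = 1`, `g₁₃ = g₂₃ = 0` is positive definite. -/
theorem stmt_15 (H : ℝ → ℝ) (x y z r : ℝ) (hr : r = Real.sqrt (x ^ 2 + y ^ 2))
    (hrpos : 0 < r) (hH : |H r| * z ^ 2 < 1) :
    (!![1 + (H r) ^ 2 * z ^ 4 - 4 * H r * z ^ 2 * x * y / r ^ 2,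
        2 * H r * z ^ 2 * (x ^ 2 - y ^ 2) / r ^ 2, 0;
        2 * H r * z ^ 2 * (x ^ 2 - y ^ 2) / r ^ 2,
        1 + (H r) ^ 2 * z ^ 4 + 4 * H r * z ^ 2 * x * y / r ^ 2, 0;
        0, 0, 1] : Matrix (Fin 3) (Fin 3) ℝ).PosDef := by
  have hr2 : r ^ 2 = x ^ 2 + y ^ 2 := by
    rw [hr, Real.sq_sqrt (by positivity)]
  have hxy : (0:ℝ) < x ^ 2 + y ^ 2 := hr2 ▸ (by positivity)
  have ha1 : |H r * z ^ 2| < 1 := by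
    rwa [abs_mul, abs_of_nonneg (sq_nonneg z)]
  have ha2 : (H r * z ^ 2) ^ 2 < 1 := by
    have h0 := abs_nonneg (H r * z ^ 2)
    nlinarith [sq_abs (H r * z ^ 2)]
  constructor
  · ext i j
    fin_cases i <;> fin_cases j <;>
      simp [Matrix.conjTranspose_apply]
  · intro v hv
    simp [Matrix.mulVec, dotProduct, Fin.sum_univ_three, Finsupp.sum_fintype]
    obtain ⟨c, hc⟩ : ∃ c : ℝ, c = H r * z ^ 2 := ⟨_, rfl⟩
    obtain ⟨p, hp⟩ : ∃ p : ℝ, p = x * v 0 + y * v 1 := ⟨_, rfl⟩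
    obtain ⟨q, hq⟩ : ∃ q : ℝ, q = x * v 1 - y * v 0 := ⟨_, rfl⟩
    have hc2 : c ^ 2 < 1 := by rw [hc]; exact ha2
    have key : v 0 * ((1 + H r ^ 2 * z ^ 4 - 4 * H r * z ^ 2 * x * y / r ^ 2) * v 0 +
          2 * H r * z ^ 2 * (x ^ 2 - y ^ 2) / r ^ 2 * v 1) +
        v 1 * (2 * H r * z ^ 2 * (x ^ 2 - y ^ 2) / r ^ 2 * v 0 +
          (1 + H r ^ 2 * z ^ 4 + 4 * H r * z ^ 2 * x * y / r ^ 2) * v 1) +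
        v 2 * v 2 =
        v 2 ^ 2 + ((p + c * q) ^ 2 + (q + c * p) ^ 2) / (x ^ 2 + y ^ 2) := by
      rw [hc, hp, hq, hr2]
      field_simp
      ring
    refine lt_of_lt_of_eq ?_ (key.symm.trans (by ring))
    have hT : (0:ℝ) ≤ ((p + c * q) ^ 2 + (q + c * p) ^ 2) / (x ^ 2 + y ^ 2) := by positivity
    by_cases h2 : v 2 = 0
    · have h01 : v 0 ≠ 0 ∨ v 1 ≠ 0 := by
        by_contra hcon
        push_neg at hcon
        apply hv
        ext i
        fin_cases i <;> simp [hcon.1, hcon.2, h2]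
      have hv01 : (0:ℝ) < v 0 ^ 2 + v 1 ^ 2 := by
        rcases h01 with h | h
        · have h' := sq_pos_of_ne_zero h
          have := sq_nonneg (v 1); linarith
        · have h' := sq_pos_of_ne_zero h
          have := sq_nonneg (v 0); linarith
      have hpq : (0:ℝ) < p ^ 2 + q ^ 2 := by
        have e : p ^ 2 + q ^ 2 = (x ^ 2 + y ^ 2) * (v 0 ^ 2 + v 1 ^ 2) := by
          rw [hp, hq]; ring
        rw [e]; exact mul_pos hxy hv01
      have hTpos : (0:ℝ) < (p + c * q) ^ 2 + (q + c * p) ^ 2 := by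
        rcases lt_or_eq_of_le (by positivity : (0:ℝ) ≤ (p + c * q) ^ 2 + (q + c * p) ^ 2)
          with h | h
        · exact h
        · exfalso
          obtain ⟨e1, e2⟩ :=
            (add_eq_zero_iff_of_nonneg (sq_nonneg (p + c * q)) (sq_nonneg (q + c * p))).mp h.symm
          have f1 : p + c * q = 0 := by
            have := sq_eq_zero_iff.mp e1; exact this
          have f2 : q + c * p = 0 := by
            have := sq_eq_zero_iff.mp e2; exact this
          have g1 : p * (1 - c ^ 2) = 0 := by linear_combination f1 - c * f2
          have hpzero : p = 0 := by
            rcases mul_eq_zero.mp g1 with hp0 | hc0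
            · exact hp0
            · exfalso; linarith
          have hqzero : q = 0 := by
            have h3 := f2; rw [hpzero] at h3; simpa using h3
          rw [hpzero, hqzero] at hpq; simp at hpq
      have hdiv : (0:ℝ) < ((p + c * q) ^ 2 + (q + c * p) ^ 2) / (x ^ 2 + y ^ 2) :=
        div_pos hTpos hxy
      have hv2 := sq_nonneg (v 2)
      linarith
    · have h2' : (0:ℝ) < v 2 ^ 2 := sq_pos_of_ne_zero h2
      linarith
end
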